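/- arXiv:1011.0079 — 10 statements merged into one kernel-verified Lean document; each statement's English description precedes it below -/
import Mathlib

section
/- If X is a normal Hausdorff space, then the standard contact algebra (RC(X), ρ_X) satisfies axiom (C5): if F(-ρ_X)G then there exists H ∈ RC(X) with F(-ρ_X)H and G(-ρ_X)H*. -/
open Set

/-- In a normal Hausdorff space, (RC(X), ρ_X) satisfies (C5):
if F ∩ G = ∅ then there is a regular closed H with F ∩ H = ∅ and G ∩ H* = ∅. -/
theorem stmt_4 (X : Type*) [TopologicalSpace X] [NormalSpace X] [T2Space X]
    (F G : Set X) (hF : closure (interior F) = F) (hG : closure (interior G) = G)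
    (h : F ∩ G = ∅) :
    ∃ H : Set X, closure (interior H) = H ∧ F ∩ H = ∅ ∧ G ∩ closure Hᶜ = ∅ := by
  have hFc : IsClosed F := hF ▸ isClosed_closure
  have hGc : IsClosed G := hG ▸ isClosed_closure
  obtain ⟨U, V, hU, hV, hFU, hGV, hUV⟩ :=
    NormalSpace.normal F G hFc hGc (disjoint_iff_inter_eq_empty.mpr h)
  refine ⟨closure V, ?_, ?_, ?_⟩
  · apply subset_antisymm
    · exact closure_minimal interior_subset isClosed_closure
    · exact closure_mono (hV.subset_interior_iff.mpr subset_closure)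
  · have hVU : closure V ⊆ Uᶜ :=
      closure_minimal (subset_compl_iff_disjoint_left.mpr hUV) hU.isClosed_compl
    rw [← disjoint_iff_inter_eq_empty, ← subset_compl_iff_disjoint_right]
    exact subset_compl_comm.mp (hVU.trans (compl_subset_compl.mpr hFU))
  · have : closure (closure V)ᶜ ⊆ Vᶜ :=
      closure_minimal (compl_subset_compl.mpr subset_closure) hV.isClosed_compl
    rw [← disjoint_iff_inter_eq_empty, ← subset_compl_iff_disjoint_right]
    exact subset_compl_comm.mp (this.trans (compl_subset_compl.mpr hGV))
end

section
/- Let (B, C) be a normal contact algebra and σ a cluster in (B, C). If a ∈ B and a ∉ σ, then there exists b ∈ B such that b ∉ σ and a ≪ b (i.e., a(-C)b*). -/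
/-- In a normal contact algebra, if σ is a cluster and a ∉ σ, then
there is b ∉ σ with a ≪ b (i.e. ¬ C a bᶜ). -/
theorem stmt_5 {B : Type*} [BooleanAlgebra B] (C : B → B → Prop)
    (hC1 : ∀ a : B, a ≠ ⊥ → C a a)
    (hC2 : ∀ a b : B, C a b → a ≠ ⊥ ∧ b ≠ ⊥)
    (hC3 : ∀ a b : B, C a b → C b a)
    (hC4 : ∀ a b c : B, C a (b ⊔ c) ↔ C a b ∨ C a c)
    (hC5 : ∀ a b : B, ¬ C a b → ∃ c : B, ¬ C a c ∧ ¬ C b cᶜ)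
    (hC6 : ∀ a : B, a ≠ ⊤ → ∃ b : B, b ≠ ⊥ ∧ ¬ C b a)
    (σ : Set B) (hne : σ.Nonempty)
    (hK1 : ∀ a ∈ σ, ∀ b ∈ σ, C a b)
    (hK2 : ∀ a b : B, a ⊔ b ∈ σ → a ∈ σ ∨ b ∈ σ)
    (hK3 : ∀ a : B, (∀ b ∈ σ, C a b) → a ∈ σ)
    (a : B) (ha : a ∉ σ) :
    ∃ b : B, b ∉ σ ∧ ¬ C a bᶜ := by
  -- Since a ∉ σ, by (K3) there is d ∈ σ with ¬ C a d.
  have h : ¬ ∀ b ∈ σ, C a b := fun h => ha (hK3 a h)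
  push_neg at h
  obtain ⟨d, hd, had⟩ := h
  -- By (C5), get c with ¬ C a c and ¬ C d cᶜ.
  obtain ⟨c, hac, hdc⟩ := hC5 a d had
  refine ⟨cᶜ, fun hmem => hdc (hC3 _ _ (hK1 _ hmem _ hd)), ?_⟩
  simpa using hac
end

section
/- Let (B, ρ, 𝔹) be a local contact algebra. Then (B, C_ρ), where a C_ρ b iff (a ρ b, or both a ∉ 𝔹 and b ∉ 𝔹), is a normal contact algebra. -/
/-- If (B, ρ, 𝔹) is a local contact algebra, then (B, C_ρ), where
a C_ρ b iff (a ρ b or a,b ∉ 𝔹), is a normal contact algebra. -/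
theorem stmt_6 {B : Type*} [BooleanAlgebra B] (ρ : B → B → Prop) (𝔹 : Set B)
    -- (B, ρ) is a contact algebra
    (hC1 : ∀ a : B, a ≠ ⊥ → ρ a a)
    (hC2 : ∀ a b : B, ρ a b → a ≠ ⊥ ∧ b ≠ ⊥)
    (hC3 : ∀ a b : B, ρ a b → ρ b a)
    (hC4 : ∀ a b c : B, ρ a (b ⊔ c) ↔ ρ a b ∨ ρ a c)
    -- 𝔹 is an ideal of B
    (hbot : ⊥ ∈ 𝔹)
    (hdown : ∀ a b : B, a ≤ b → b ∈ 𝔹 → a ∈ 𝔹)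
    (hsup : ∀ a b : B, a ∈ 𝔹 → b ∈ 𝔹 → a ⊔ b ∈ 𝔹)
    -- (BC1)-(BC3), where a ≪_ρ b means ¬ ρ a bᶜ
    (hBC1 : ∀ a c : B, a ∈ 𝔹 → ¬ ρ a cᶜ → ∃ b ∈ 𝔹, ¬ ρ a bᶜ ∧ ¬ ρ b cᶜ)
    (hBC2 : ∀ a b : B, ρ a b → ∃ c ∈ 𝔹, ρ a (c ⊓ b))
    (hBC3 : ∀ a : B, a ≠ ⊥ → ∃ b ∈ 𝔹, b ≠ ⊥ ∧ ¬ ρ b aᶜ) :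
    -- (B, C_ρ) is a normal contact algebra, where
    -- C_ρ a b := ρ a b ∨ (a ∉ 𝔹 ∧ b ∉ 𝔹)
    (∀ a : B, a ≠ ⊥ → (ρ a a ∨ (a ∉ 𝔹 ∧ a ∉ 𝔹))) ∧
    (∀ a b : B, (ρ a b ∨ (a ∉ 𝔹 ∧ b ∉ 𝔹)) → a ≠ ⊥ ∧ b ≠ ⊥) ∧
    (∀ a b : B, (ρ a b ∨ (a ∉ 𝔹 ∧ b ∉ 𝔹)) → (ρ b a ∨ (b ∉ 𝔹 ∧ a ∉ 𝔹))) ∧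
    (∀ a b c : B, (ρ a (b ⊔ c) ∨ (a ∉ 𝔹 ∧ b ⊔ c ∉ 𝔹)) ↔
      ((ρ a b ∨ (a ∉ 𝔹 ∧ b ∉ 𝔹)) ∨ (ρ a c ∨ (a ∉ 𝔹 ∧ c ∉ 𝔹)))) ∧
    (∀ a b : B, ¬ (ρ a b ∨ (a ∉ 𝔹 ∧ b ∉ 𝔹)) →
      ∃ c : B, ¬ (ρ a c ∨ (a ∉ 𝔹 ∧ c ∉ 𝔹)) ∧ ¬ (ρ b cᶜ ∨ (b ∉ 𝔹 ∧ cᶜ ∉ 𝔹))) ∧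
    (∀ a : B, a ≠ ⊤ → ∃ b : B, b ≠ ⊥ ∧ ¬ (ρ b a ∨ (b ∉ 𝔹 ∧ a ∉ 𝔹))) := by
  refine ⟨fun a ha => Or.inl (hC1 a ha), ?_, ?_, ?_, ?_, ?_⟩
  · rintro a b (h | ⟨ha, hb⟩)
    · exact hC2 a b h
    · exact ⟨fun h => ha (h ▸ hbot), fun h => hb (h ▸ hbot)⟩
  · rintro a b (h | ⟨ha, hb⟩)
    · exact Or.inl (hC3 a b h)
    · exact Or.inr ⟨hb, ha⟩
  · intro a b c
    constructor
    · rintro (h | ⟨ha, hbc⟩)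
      · rcases (hC4 a b c).1 h with h | h
        · exact Or.inl (Or.inl h)
        · exact Or.inr (Or.inl h)
      · by_cases hb : b ∈ 𝔹
        · refine Or.inr (Or.inr ⟨ha, fun hc => hbc (hsup b c hb hc)⟩)
        · exact Or.inl (Or.inr ⟨ha, hb⟩)
    · rintro ((h | ⟨ha, hb⟩) | (h | ⟨ha, hc⟩))
      · exact Or.inl ((hC4 a b c).2 (Or.inl h))
      · exact Or.inr ⟨ha, fun h => hb (hdown b (b ⊔ c) le_sup_left h)⟩
      · exact Or.inl ((hC4 a b c).2 (Or.inr h))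
      · exact Or.inr ⟨ha, fun h => hc (hdown c (b ⊔ c) le_sup_right h)⟩
  · intro a b hab
    push_neg at hab
    obtain ⟨hρ, hmem⟩ := hab
    by_cases ha : a ∈ 𝔹
    · have hρ' : ¬ ρ a (bᶜ)ᶜ := by rwa [compl_compl]
      obtain ⟨d, hd, h1, h2⟩ := hBC1 a bᶜ ha hρ'
      rw [compl_compl] at h2
      refine ⟨dᶜ, ?_, ?_⟩
      · rintro (h | ⟨ha', _⟩)
        · exact h1 h
        · exact ha' ha
      · rw [compl_compl]
        rintro (h | ⟨_, hd'⟩)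
        · exact h2 (hC3 b d h)
        · exact hd' hd
    · have hb : b ∈ 𝔹 := hmem ha
      have hρ' : ¬ ρ b (aᶜ)ᶜ := by rw [compl_compl]; exact fun h => hρ (hC3 b a h)
      obtain ⟨d, hd, h1, h2⟩ := hBC1 b aᶜ hb hρ'
      rw [compl_compl] at h2
      refine ⟨d, ?_, ?_⟩
      · rintro (h | ⟨_, hd'⟩)
        · exact h2 (hC3 a d h)
        · exact hd' hd
      · rintro (h | ⟨hb', _⟩)
        · exact h1 h
        · exact hb' hb
  · intro a ha
    have hac : aᶜ ≠ ⊥ := fun h => ha (by simpa using congrArg compl h)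
    obtain ⟨b, hb𝔹, hbne, hρ⟩ := hBC3 aᶜ hac
    rw [compl_compl] at hρ
    refine ⟨b, hbne, ?_⟩
    rintro (h | ⟨hb', _⟩)
    · exact hρ h
    · exact hb' hb𝔹
end

section
/- Let (B, ρ, 𝔹) be a local contact algebra with 1 ∉ 𝔹. Then σ_∞ = {b ∈ B : b ∉ 𝔹} is a cluster in the normal contact algebra (B, C_ρ), where C_ρ is the Alexandroff extension of ρ. -/
/-- If (B, ρ, 𝔹) is a local contact algebra with 1 ∉ 𝔹, then
σ_∞ = {b : b ∉ 𝔹} is a cluster in (B, C_ρ). -/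
theorem stmt_7 {B : Type*} [BooleanAlgebra B] (ρ : B → B → Prop) (𝔹 : Set B)
    (hC1 : ∀ a : B, a ≠ ⊥ → ρ a a)
    (hC2 : ∀ a b : B, ρ a b → a ≠ ⊥ ∧ b ≠ ⊥)
    (hC3 : ∀ a b : B, ρ a b → ρ b a)
    (hC4 : ∀ a b c : B, ρ a (b ⊔ c) ↔ ρ a b ∨ ρ a c)
    (hbot : ⊥ ∈ 𝔹)
    (hdown : ∀ a b : B, a ≤ b → b ∈ 𝔹 → a ∈ 𝔹)
    (hsup : ∀ a b : B, a ∈ 𝔹 → b ∈ 𝔹 → a ⊔ b ∈ 𝔹)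
    (hBC1 : ∀ a c : B, a ∈ 𝔹 → ¬ ρ a cᶜ → ∃ b ∈ 𝔹, ¬ ρ a bᶜ ∧ ¬ ρ b cᶜ)
    (hBC2 : ∀ a b : B, ρ a b → ∃ c ∈ 𝔹, ρ a (c ⊓ b))
    (hBC3 : ∀ a : B, a ≠ ⊥ → ∃ b ∈ 𝔹, b ≠ ⊥ ∧ ¬ ρ b aᶜ)
    (htop : (⊤ : B) ∉ 𝔹) :
    -- σ_∞ = {b | b ∉ 𝔹} is a cluster in (B, C_ρ), where
    -- C_ρ a b := ρ a b ∨ (a ∉ 𝔹 ∧ b ∉ 𝔹)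
    ({b : B | b ∉ 𝔹}.Nonempty) ∧
    (∀ a ∈ {b : B | b ∉ 𝔹}, ∀ b ∈ {b : B | b ∉ 𝔹}, ρ a b ∨ (a ∉ 𝔹 ∧ b ∉ 𝔹)) ∧
    (∀ a b : B, a ⊔ b ∈ {b : B | b ∉ 𝔹} → a ∈ {b : B | b ∉ 𝔹} ∨ b ∈ {b : B | b ∉ 𝔹}) ∧
    (∀ a : B, (∀ b ∈ {b : B | b ∉ 𝔹}, ρ a b ∨ (a ∉ 𝔹 ∧ b ∉ 𝔹)) → a ∈ {b : B | b ∉ 𝔹}) := by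
  refine ⟨⟨⊤, htop⟩, fun a ha b hb => Or.inr ⟨ha, hb⟩, ?_, ?_⟩
  · intro a b hab
    by_contra h
    push_neg at h
    simp only [Set.mem_setOf_eq, not_not] at h hab
    exact hab (hsup a b h.1 h.2)
  · intro a h
    simp only [Set.mem_setOf_eq]
    intro ha
    have hnρ : ¬ ρ a (⊤ : B)ᶜ := by
      rw [compl_top]
      intro hr
      exact (hC2 a ⊥ hr).2 rfl
    obtain ⟨b, hb, hab, -⟩ := hBC1 a ⊤ ha hnρ
    have hbc : bᶜ ∉ 𝔹 := fun hbc => htop (by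
      have := hsup b bᶜ hb hbc
      rwa [sup_compl_eq_top] at this)
    rcases h bᶜ hbc with hr | ⟨ha', _⟩
    · exact hab hr
    · exact ha' ha
end

section
/- If X is a locally compact Hausdorff space, then (RC(X), ρ_X, CR(X)) is a local contact algebra, where CR(X) is the set of compact regular closed subsets of X. -/
open Set

lemma rc_idem {X : Type*} [TopologicalSpace X] (K : Set X) :
    closure (interior (closure (interior K))) = closure (interior K) := by
  apply subset_antisymm
  · exact closure_minimal (interior_subset.trans subset_rfl) isClosed_closure
  · exact closure_mono (interior_maximal subset_closure isOpen_interior)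

/-- For a locally compact Hausdorff space X, (RC(X), ρ_X, CR(X)) is a
local contact algebra. Here F ≪ G means F ∩ cl(Gᶜ) = ∅ (i.e. F (-ρ) G*). -/
theorem stmt_8 (X : Type*) [TopologicalSpace X] [LocallyCompactSpace X] [T2Space X] :
    -- (RC(X), ρ_X) is a contact algebra
    (∀ F : Set X, closure (interior F) = F → F ≠ ∅ → F ∩ F ≠ ∅) ∧
    (∀ F G : Set X, F ∩ G ≠ ∅ → F ≠ ∅ ∧ G ≠ ∅) ∧
    (∀ F G : Set X, F ∩ G ≠ ∅ → G ∩ F ≠ ∅) ∧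
    (∀ F G H : Set X, F ∩ (G ∪ H) ≠ ∅ ↔ F ∩ G ≠ ∅ ∨ F ∩ H ≠ ∅) ∧
    -- CR(X) is an ideal of RC(X)
    ((∅ : Set X) ∈ {F : Set X | closure (interior F) = F ∧ IsCompact F}) ∧
    (∀ F G : Set X, closure (interior F) = F → F ⊆ G →
      closure (interior G) = G ∧ IsCompact G → IsCompact F) ∧
    (∀ F G : Set X, (closure (interior F) = F ∧ IsCompact F) →
      (closure (interior G) = G ∧ IsCompact G) →
      closure (interior (F ∪ G)) = F ∪ G ∧ IsCompact (F ∪ G)) ∧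
    -- (BC1)
    (∀ F H : Set X, closure (interior F) = F → IsCompact F →
      closure (interior H) = H → F ∩ closure Hᶜ = ∅ →
      ∃ G : Set X, closure (interior G) = G ∧ IsCompact G ∧
        F ∩ closure Gᶜ = ∅ ∧ G ∩ closure Hᶜ = ∅) ∧
    -- (BC2)
    (∀ F G : Set X, closure (interior F) = F → closure (interior G) = G →
      F ∩ G ≠ ∅ → ∃ H : Set X, closure (interior H) = H ∧ IsCompact H ∧
        F ∩ closure (interior (H ∩ G)) ≠ ∅) ∧
    -- (BC3)
    (∀ F : Set X, closure (interior F) = F → F ≠ ∅ →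
      ∃ G : Set X, closure (interior G) = G ∧ IsCompact G ∧ G ≠ ∅ ∧
        G ∩ closure Fᶜ = ∅) := by
  refine ⟨?_, ?_, ?_, ?_, ?_, ?_, ?_, ?_, ?_, ?_⟩
  · intro F _ hF; simpa using hF
  · intro F G h
    constructor <;> (intro he; apply h; subst he; simp)
  · intro F G h; rwa [inter_comm]
  · intro F G H
    rw [inter_union_distrib_left, ← nonempty_iff_ne_empty, ← nonempty_iff_ne_empty,
      ← nonempty_iff_ne_empty, union_nonempty]
  · exact ⟨by simp, isCompact_empty⟩
  · intro F G hF hFG ⟨_, hGc⟩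
    exact hGc.of_isClosed_subset (hF ▸ isClosed_closure) hFG
  · intro F G ⟨hF, hFc⟩ ⟨hG, hGc⟩
    refine ⟨subset_antisymm ?_ ?_, hFc.union hGc⟩
    · exact closure_minimal (interior_subset) ((hF ▸ isClosed_closure).union (hG ▸ isClosed_closure))
    · calc F ∪ G = closure (interior F) ∪ closure (interior G) := by rw [hF, hG]
        _ = closure (interior F ∪ interior G) := closure_union.symm
        _ ⊆ closure (interior (F ∪ G)) := closure_mono
            (union_subset (interior_mono subset_union_left) (interior_mono subset_union_right))
  · -- BC1
    intro F H hF hFc hH hdis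
    have hFsub : F ⊆ interior H := by
      rw [← compl_compl (interior H), ← closure_compl]
      rwa [← disjoint_iff_inter_eq_empty, ← subset_compl_iff_disjoint_right] at hdis
    obtain ⟨K, hKc, hFK, hKH⟩ := exists_compact_between hFc isOpen_interior hFsub
    refine ⟨closure (interior K), rc_idem K, ?_, ?_, ?_⟩
    · exact hKc.of_isClosed_subset isClosed_closure (closure_minimal interior_subset hKc.isClosed)
    · rw [closure_compl, ← disjoint_iff_inter_eq_empty, ← subset_compl_iff_disjoint_right,
        compl_compl]
      exact hFK.trans (interior_maximal subset_closure isOpen_interior)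
    · rw [closure_compl, ← disjoint_iff_inter_eq_empty, ← subset_compl_iff_disjoint_right,
        compl_compl]
      exact (closure_minimal interior_subset hKc.isClosed).trans hKH
  · -- BC2
    intro F G hF hG hFG
    obtain ⟨x, hxF, hxG⟩ := nonempty_iff_ne_empty.2 hFG
    obtain ⟨K, hKc, hKx⟩ := exists_compact_mem_nhds x
    refine ⟨closure (interior K), rc_idem K, ?_, ?_⟩
    · exact hKc.of_isClosed_subset isClosed_closure (closure_minimal interior_subset hKc.isClosed)
    · have hsub : interior K ∩ interior G ⊆ interior (closure (interior K) ∩ G) := by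
        apply interior_maximal _ (isOpen_interior.inter isOpen_interior)
        exact inter_subset_inter subset_closure interior_subset
      have hx : x ∈ closure (interior K ∩ interior G) := by
        have hxK : x ∈ interior K := mem_interior_iff_mem_nhds.2 hKx
        have hxcl : x ∈ closure (interior G) := by rw [← hG] at hxG; exact hxG
        rw [mem_closure_iff_nhds] at hxcl ⊢
        intro t ht
        obtain ⟨y, ⟨hyt, hyK⟩, hyG⟩ := hxcl (t ∩ interior K)
          (Filter.inter_mem ht (isOpen_interior.mem_nhds hxK))
        exact ⟨y, hyt, hyK, hyG⟩
      apply nonempty_iff_ne_empty.1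
      exact ⟨x, hxF, closure_mono hsub hx⟩
  · -- BC3
    intro F hF hFne
    have hint : (interior F).Nonempty := by
      rcases eq_empty_or_nonempty (interior F) with h | h
      · exact absurd (by rw [← hF, h, closure_empty]) hFne
      · exact h
    obtain ⟨x, hx⟩ := hint
    obtain ⟨K, hKc, hFK, hKH⟩ := exists_compact_between isCompact_singleton isOpen_interior
      (singleton_subset_iff.2 hx)
    refine ⟨closure (interior K), rc_idem K, ?_, ?_, ?_⟩
    · exact hKc.of_isClosed_subset isClosed_closure (closure_minimal interior_subset hKc.isClosed)
    · exact nonempty_iff_ne_empty.1 ⟨x, subset_closure (hFK rfl)⟩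
    · rw [closure_compl, ← disjoint_iff_inter_eq_empty, ← subset_compl_iff_disjoint_right,
        compl_compl]
      exact (closure_minimal interior_subset hKc.isClosed).trans hKH
end

section
/- Let (A, ρ, 𝔹) be a local contact algebra. The poset of δ-ideals of (A, ρ, 𝔹), ordered by inclusion, is a frame (complete lattice satisfying the infinite distributive law), in which finite meets and arbitrary joins coincide with those in the frame Idl(A) of all ideals of A. -/
/-- `I` is a δ-ideal of the local contact algebra `(A, ρ, 𝔹)`. -/
def IsDeltaIdeal {A : Type*} [BooleanAlgebra A] (ρ : A → A → Prop) (𝔹 : Set A)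
    (I : Set A) : Prop :=
  (⊥ ∈ I) ∧ (∀ a b : A, a ≤ b → b ∈ I → a ∈ I) ∧
  (∀ a b : A, a ∈ I → b ∈ I → a ⊔ b ∈ I) ∧ I ⊆ 𝔹 ∧
  (∀ a ∈ I, ∃ b ∈ I, ¬ ρ a bᶜ)

/-- The join of a family of ideals in Idl(A): all finite joins of elements
of the members of the family. -/
def idealJoin {A : Type*} [BooleanAlgebra A] (S : Set (Set A)) : Set A :=
  {x : A | ∃ s : Finset A, (↑s : Set A) ⊆ ⋃₀ S ∧ x = s.sup id}

/-- The poset of δ-ideals of a local contact algebra (A, ρ, 𝔹), ordered by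
inclusion, is a frame in which finite meets and arbitrary joins coincide
with those in the frame Idl(A) of all ideals of A. -/
theorem stmt_10 {A : Type*} [BooleanAlgebra A] (ρ : A → A → Prop) (𝔹 : Set A)
    (hC1 : ∀ a : A, a ≠ ⊥ → ρ a a)
    (hC2 : ∀ a b : A, ρ a b → a ≠ ⊥ ∧ b ≠ ⊥)
    (hC3 : ∀ a b : A, ρ a b → ρ b a)
    (hC4 : ∀ a b c : A, ρ a (b ⊔ c) ↔ ρ a b ∨ ρ a c)
    (hbot : ⊥ ∈ 𝔹)
    (hdown : ∀ a b : A, a ≤ b → b ∈ 𝔹 → a ∈ 𝔹)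
    (hsup : ∀ a b : A, a ∈ 𝔹 → b ∈ 𝔹 → a ⊔ b ∈ 𝔹)
    (hBC1 : ∀ a c : A, a ∈ 𝔹 → ¬ ρ a cᶜ → ∃ b ∈ 𝔹, ¬ ρ a bᶜ ∧ ¬ ρ b cᶜ)
    (hBC2 : ∀ a b : A, ρ a b → ∃ c ∈ 𝔹, ρ a (c ⊓ b))
    (hBC3 : ∀ a : A, a ≠ ⊥ → ∃ b ∈ 𝔹, b ≠ ⊥ ∧ ¬ ρ b aᶜ) :
    ∃ inst : Order.Frame {I : Set A // IsDeltaIdeal ρ 𝔹 I},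
      letI := inst
      (∀ I J : {I : Set A // IsDeltaIdeal ρ 𝔹 I}, I ≤ J ↔ I.1 ⊆ J.1) ∧
      (∀ I J : {I : Set A // IsDeltaIdeal ρ 𝔹 I}, (I ⊓ J).1 = I.1 ∩ J.1) ∧
      (∀ S : Set {I : Set A // IsDeltaIdeal ρ 𝔹 I},
        (sSup S).1 = idealJoin (Subtype.val '' S)) := by
  classical
  -- monotonicity of ρ in second argument
  have hmono : ∀ a b c : A, ρ a b → b ≤ c → ρ a c := by
    intro a b c hab hbc
    have := (hC4 a b c).mpr (Or.inl hab)
    rwa [sup_eq_right.mpr hbc] at this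
  -- ρ on a finite sup on the left
  have hsupρ : ∀ (t : Finset A) (f : A → A) (c : A), ρ (t.sup f) c → ∃ y ∈ t, ρ (f y) c := by
    intro t f c
    induction t using Finset.induction_on with
    | empty =>
      intro h
      exact absurd rfl (hC2 _ _ h).1
    | @insert a t ha ih =>
      intro h
      rw [Finset.sup_insert] at h
      rcases (hC4 c _ _).mp (hC3 _ _ h) with h' | h'
      · exact ⟨_, Finset.mem_insert_self _ _, hC3 _ _ h'⟩
      · obtain ⟨y, hy, hρ⟩ := ih (hC3 _ _ h')
        exact ⟨y, Finset.mem_insert_of_mem hy, hρ⟩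
  -- finite sups stay in a δ-ideal
  have hfs : ∀ (I : Set A), IsDeltaIdeal ρ 𝔹 I → ∀ (t : Finset A) (f : A → A),
      (∀ y ∈ t, f y ∈ I) → t.sup f ∈ I := by
    intro I hI t f hf
    exact Finset.sup_induction hI.1 (fun a ha b hb => hI.2.2.1 a b ha hb) hf
  -- intersection of δ-ideals is a δ-ideal
  have hinter : ∀ I J : Set A, IsDeltaIdeal ρ 𝔹 I → IsDeltaIdeal ρ 𝔹 J →
      IsDeltaIdeal ρ 𝔹 (I ∩ J) := by
    intro I J hI hJ
    refine ⟨⟨hI.1, hJ.1⟩, fun a b hab hb => ⟨hI.2.1 a b hab hb.1, hJ.2.1 a b hab hb.2⟩,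
      fun a b ha hb => ⟨hI.2.2.1 a b ha.1 hb.1, hJ.2.2.1 a b ha.2 hb.2⟩,
      fun a ha => hI.2.2.2.1 ha.1, ?_⟩
    intro a ha
    obtain ⟨b₁, hb₁, hρ₁⟩ := hI.2.2.2.2 a ha.1
    obtain ⟨b₂, hb₂, hρ₂⟩ := hJ.2.2.2.2 a ha.2
    refine ⟨b₁ ⊓ b₂, ⟨hI.2.1 _ _ inf_le_left hb₁, hJ.2.1 _ _ inf_le_right hb₂⟩, ?_⟩
    rw [compl_inf, hC4]
    rintro (h | h)
    · exact hρ₁ h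
    · exact hρ₂ h
  -- ideal join of δ-ideals is a δ-ideal
  have hjoin : ∀ S : Set (Set A), (∀ I ∈ S, IsDeltaIdeal ρ 𝔹 I) →
      IsDeltaIdeal ρ 𝔹 (idealJoin S) := by
    intro S hS
    have hmemJ : ∀ x I, I ∈ S → x ∈ I → x ∈ idealJoin S := by
      intro x I hI hx
      refine ⟨{x}, ?_, by simp⟩
      simp only [Finset.coe_singleton, Set.singleton_subset_iff]
      exact ⟨I, hI, hx⟩
    refine ⟨⟨∅, by simp, by simp⟩, ?_, ?_, ?_, ?_⟩
    · -- downward closed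
      rintro a b hab ⟨t, ht, rfl⟩
      refine ⟨t.image (fun y => a ⊓ y), ?_, ?_⟩
      · intro z hz
        simp only [Finset.coe_image, Set.mem_image] at hz
        obtain ⟨y, hy, rfl⟩ := hz
        obtain ⟨I, hI, hyI⟩ := ht hy
        exact ⟨I, hI, (hS I hI).2.1 _ _ inf_le_right hyI⟩
      · rw [Finset.sup_image]
        have : t.sup (id ∘ fun y => a ⊓ y) = a ⊓ t.sup id := by
          rw [Finset.sup_inf_distrib_left]; rfl
        rw [this, inf_eq_left.mpr hab]
    · -- closed under ⊔
      rintro a b ⟨t, ht, rfl⟩ ⟨u, hu, rfl⟩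
      refine ⟨t ∪ u, ?_, ?_⟩
      · rw [Finset.coe_union]
        exact Set.union_subset ht hu
      · rw [Finset.sup_union]
    · -- contained in 𝔹
      rintro x ⟨t, ht, rfl⟩
      refine Finset.sup_induction hbot (fun a ha b hb => hsup a b ha hb) ?_
      intro y hy
      obtain ⟨I, hI, hyI⟩ := ht hy
      exact (hS I hI).2.2.2.1 hyI
    · -- δ-condition
      rintro a ⟨t, ht, rfl⟩
      have h : ∀ y ∈ t, ∃ b, b ∈ ⋃₀ S ∧ ¬ ρ y bᶜ := by
        intro y hy
        obtain ⟨I, hI, hyI⟩ := ht hy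
        obtain ⟨b, hb, hρ⟩ := (hS I hI).2.2.2.2 y hyI
        exact ⟨b, ⟨I, hI, hb⟩, hρ⟩
      choose f hf1 hf2 using h
      set B := t.attach.sup (fun y => f y.1 y.2) with hB
      refine ⟨B, ?_, ?_⟩
      · refine ⟨t.attach.image (fun y => f y.1 y.2), ?_, ?_⟩
        · intro z hz
          simp only [Finset.coe_image, Set.mem_image] at hz
          obtain ⟨y, _, rfl⟩ := hz
          exact hf1 y.1 y.2
        · rw [Finset.sup_image]; rfl
      · intro hρ
        obtain ⟨y, hy, hρy⟩ := hsupρ t id Bᶜ hρ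
        have hle : f y hy ≤ B :=
          Finset.le_sup (f := fun y : {x // x ∈ t} => f y.1 y.2) (Finset.mem_attach t ⟨y, hy⟩)
        exact hf2 y hy (hmono _ _ _ hρy (compl_le_compl hle))
  -- the type of δ-ideals
  letI supSet : SupSet {I : Set A // IsDeltaIdeal ρ 𝔹 I} :=
    ⟨fun S => ⟨idealJoin (Subtype.val '' S), hjoin _ (by rintro I ⟨J, _, rfl⟩; exact J.2)⟩⟩
  have hle : ∀ I J : {I : Set A // IsDeltaIdeal ρ 𝔹 I}, I ≤ J ↔ I.1 ⊆ J.1 := fun _ _ => Iff.rfl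
  have hisLUB : ∀ S : Set {I : Set A // IsDeltaIdeal ρ 𝔹 I}, IsLUB S (sSup S) := by
    intro S
    constructor
    · intro J hJ x hx
      refine ⟨{x}, ?_, by simp⟩
      simp only [Finset.coe_singleton, Set.singleton_subset_iff]
      exact ⟨J.1, ⟨J, hJ, rfl⟩, hx⟩
    · rintro K hK x ⟨t, ht, rfl⟩
      refine hfs K.1 K.2 t id ?_
      intro y hy
      obtain ⟨I, ⟨J, hJ, rfl⟩, hyI⟩ := ht hy
      exact hK hJ hyI
  letI CL : CompleteLattice {I : Set A // IsDeltaIdeal ρ 𝔹 I} :=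
    completeLatticeOfSup _ hisLUB
  have hinf : ∀ I J : {I : Set A // IsDeltaIdeal ρ 𝔹 I}, (I ⊓ J).1 = I.1 ∩ J.1 := by
    intro I J
    apply Set.Subset.antisymm
    · exact Set.subset_inter ((hle _ _).mp inf_le_left) ((hle _ _).mp inf_le_right)
    · have : (⟨I.1 ∩ J.1, hinter I.1 J.1 I.2 J.2⟩ : {I : Set A // IsDeltaIdeal ρ 𝔹 I}) ≤ I ⊓ J :=
        le_inf ((hle _ _).mpr Set.inter_subset_left) ((hle _ _).mpr Set.inter_subset_right)
      exact (hle _ _).mp this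
  have hdis : ∀ (a : {I : Set A // IsDeltaIdeal ρ 𝔹 I})
      (s : Set {I : Set A // IsDeltaIdeal ρ 𝔹 I}), a ⊓ sSup s ≤ ⨆ b ∈ s, a ⊓ b := by
    intro a s
    rw [hle, hinf]
    rintro x ⟨hxa, t, ht, rfl⟩
    set T := ⨆ b ∈ s, a ⊓ b with hT
    have hx : t.sup id = t.sup (fun y => t.sup id ⊓ y) := by
      rw [← Finset.sup_inf_distrib_left]
      exact (inf_idem _).symm
    rw [hx]
    refine hfs T.1 T.2 t _ ?_
    intro y hy
    obtain ⟨I, ⟨J, hJ, rfl⟩, hyI⟩ := ht hy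
    have h1 : t.sup id ⊓ y ∈ a.1 := a.2.2.1 _ _ inf_le_left hxa
    have h2 : t.sup id ⊓ y ∈ J.1 := J.2.2.1 _ _ inf_le_right hyI
    have h3 : t.sup id ⊓ y ∈ (a ⊓ J).1 := by rw [hinf]; exact ⟨h1, h2⟩
    have h4 : a ⊓ J ≤ T := le_iSup₂ (f := fun b (_ : b ∈ s) => a ⊓ b) J hJ
    exact (hle _ _).mp h4 h3
  refine ⟨Order.Frame.ofMinimalAxioms ⟨hdis⟩, hle, hinf, fun S => rfl⟩
end

section
/- Let (A, ρ, 𝔹) be a complete local contact algebra and let σ₁, σ₂ be bounded clusters in (A, ρ, 𝔹) (i.e., clusters of (A, C_ρ) meeting 𝔹). If σ₁ ∩ 𝔹 = σ₂ ∩ 𝔹 then σ₁ = σ₂. -/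
/-- In a complete local contact algebra, bounded clusters agreeing on 𝔹
are equal. Here C_ρ a b := ρ a b ∨ (a ∉ 𝔹 ∧ b ∉ 𝔹). -/
theorem stmt_11 {A : Type*} [CompleteBooleanAlgebra A] (ρ : A → A → Prop) (𝔹 : Set A)
    (hC1 : ∀ a : A, a ≠ ⊥ → ρ a a)
    (hC2 : ∀ a b : A, ρ a b → a ≠ ⊥ ∧ b ≠ ⊥)
    (hC3 : ∀ a b : A, ρ a b → ρ b a)
    (hC4 : ∀ a b c : A, ρ a (b ⊔ c) ↔ ρ a b ∨ ρ a c)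
    (hbot : ⊥ ∈ 𝔹)
    (hdown : ∀ a b : A, a ≤ b → b ∈ 𝔹 → a ∈ 𝔹)
    (hsup : ∀ a b : A, a ∈ 𝔹 → b ∈ 𝔹 → a ⊔ b ∈ 𝔹)
    (hBC1 : ∀ a c : A, a ∈ 𝔹 → ¬ ρ a cᶜ → ∃ b ∈ 𝔹, ¬ ρ a bᶜ ∧ ¬ ρ b cᶜ)
    (hBC2 : ∀ a b : A, ρ a b → ∃ c ∈ 𝔹, ρ a (c ⊓ b))
    (hBC3 : ∀ a : A, a ≠ ⊥ → ∃ b ∈ 𝔹, b ≠ ⊥ ∧ ¬ ρ b aᶜ)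
    (σ₁ σ₂ : Set A)
    -- σ₁, σ₂ are clusters in (A, C_ρ)
    (h₁ne : σ₁.Nonempty)
    (h₁K1 : ∀ a ∈ σ₁, ∀ b ∈ σ₁, ρ a b ∨ (a ∉ 𝔹 ∧ b ∉ 𝔹))
    (h₁K2 : ∀ a b : A, a ⊔ b ∈ σ₁ → a ∈ σ₁ ∨ b ∈ σ₁)
    (h₁K3 : ∀ a : A, (∀ b ∈ σ₁, ρ a b ∨ (a ∉ 𝔹 ∧ b ∉ 𝔹)) → a ∈ σ₁)
    (h₂ne : σ₂.Nonempty)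
    (h₂K1 : ∀ a ∈ σ₂, ∀ b ∈ σ₂, ρ a b ∨ (a ∉ 𝔹 ∧ b ∉ 𝔹))
    (h₂K2 : ∀ a b : A, a ⊔ b ∈ σ₂ → a ∈ σ₂ ∨ b ∈ σ₂)
    (h₂K3 : ∀ a : A, (∀ b ∈ σ₂, ρ a b ∨ (a ∉ 𝔹 ∧ b ∉ 𝔹)) → a ∈ σ₂)
    -- bounded
    (h₁b : (σ₁ ∩ 𝔹).Nonempty) (h₂b : (σ₂ ∩ 𝔹).Nonempty)
    (h : σ₁ ∩ 𝔹 = σ₂ ∩ 𝔹) :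
    σ₁ = σ₂ := by
  have key : ∀ (τ₁ τ₂ : Set A),
      (∀ a ∈ τ₁, ∀ b ∈ τ₁, ρ a b ∨ (a ∉ 𝔹 ∧ b ∉ 𝔹)) →
      (∀ a : A, (∀ b ∈ τ₂, ρ a b ∨ (a ∉ 𝔹 ∧ b ∉ 𝔹)) → a ∈ τ₂) →
      τ₁ ∩ 𝔹 = τ₂ ∩ 𝔹 → τ₁ ⊆ τ₂ := by
    intro τ₁ τ₂ hK1 hK3 heq a ha
    by_cases haB : a ∈ 𝔹
    · have : a ∈ τ₂ ∩ 𝔹 := heq ▸ ⟨ha, haB⟩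
      exact this.1
    · apply hK3
      intro b hb
      by_cases hbB : b ∈ 𝔹
      · have hb1 : b ∈ τ₁ := (heq.symm ▸ (⟨hb, hbB⟩ : b ∈ τ₂ ∩ 𝔹) : b ∈ τ₁ ∩ 𝔹).1
        rcases hK1 a ha b hb1 with h' | h'
        · exact Or.inl h'
        · exact absurd hbB h'.2
      · exact Or.inr ⟨haB, hbB⟩
  exact Set.Subset.antisymm (key σ₁ σ₂ h₁K1 h₂K3 h) (key σ₂ σ₁ h₂K1 h₁K3 h.symm)
end

section
/- Let f : X → Y be a continuous map between locally compact Hausdorff spaces, and define φ_f : RC(Y) → powerset of RC(X) by φ_f(G) = {F ∈ CR(X) : F ⊆ f⁻¹(int G)}. Then for every G ∈ RC(Y), φ_f(G) is a δ-ideal of the local contact algebra (RC(X), ρ_X, CR(X)). -/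
open Set

/-- For a continuous map f : X → Y between locally compact Hausdorff spaces and
G ∈ RC(Y), the set φ_f(G) = {F ∈ CR(X) : F ⊆ f⁻¹(int G)} is a δ-ideal of
(RC(X), ρ_X, CR(X)). -/
theorem stmt_13 {X Y : Type*} [TopologicalSpace X] [LocallyCompactSpace X] [T2Space X]
    [TopologicalSpace Y] [LocallyCompactSpace Y] [T2Space Y]
    (f : X → Y) (hf : Continuous f)
    (G : Set Y) (hG : closure (interior G) = G) :
    -- φ_f(G) = {F | F ∈ CR(X) ∧ F ⊆ f⁻¹(int G)}
    -- contains ∅,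
    ((∅ : Set X) ∈ {F : Set X | (closure (interior F) = F ∧ IsCompact F) ∧
        F ⊆ f ⁻¹' (interior G)}) ∧
    -- is downward closed within RC(X),
    (∀ F F' : Set X, closure (interior F) = F → F ⊆ F' →
      F' ∈ {F : Set X | (closure (interior F) = F ∧ IsCompact F) ∧
        F ⊆ f ⁻¹' (interior G)} →
      F ∈ {F : Set X | (closure (interior F) = F ∧ IsCompact F) ∧
        F ⊆ f ⁻¹' (interior G)}) ∧
    -- is closed under binary unions,
    (∀ F F' : Set X,
      F ∈ {F : Set X | (closure (interior F) = F ∧ IsCompact F) ∧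
        F ⊆ f ⁻¹' (interior G)} →
      F' ∈ {F : Set X | (closure (interior F) = F ∧ IsCompact F) ∧
        F ⊆ f ⁻¹' (interior G)} →
      F ∪ F' ∈ {F : Set X | (closure (interior F) = F ∧ IsCompact F) ∧
        F ⊆ f ⁻¹' (interior G)}) ∧
    -- is contained in CR(X),
    ({F : Set X | (closure (interior F) = F ∧ IsCompact F) ∧
        F ⊆ f ⁻¹' (interior G)} ⊆
      {F : Set X | closure (interior F) = F ∧ IsCompact F}) ∧
    -- and satisfies the δ-condition.
    (∀ F ∈ {F : Set X | (closure (interior F) = F ∧ IsCompact F) ∧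
        F ⊆ f ⁻¹' (interior G)},
      ∃ F' ∈ {F : Set X | (closure (interior F) = F ∧ IsCompact F) ∧
        F ⊆ f ⁻¹' (interior G)}, F ⊆ interior F') := by
  refine ⟨⟨⟨by simp, isCompact_empty⟩, empty_subset _⟩, ?_, ?_, ?_, ?_⟩
  · rintro F F' hF hFF' ⟨⟨_, hF'c⟩, hF's⟩
    exact ⟨⟨hF, hF'c.of_isClosed_subset (hF ▸ isClosed_closure) hFF'⟩, hFF'.trans hF's⟩
  · rintro F F' ⟨⟨hFr, hFc⟩, hFs⟩ ⟨⟨hF'r, hF'c⟩, hF's⟩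
    refine ⟨⟨?_, hFc.union hF'c⟩, union_subset hFs hF's⟩
    apply subset_antisymm
    · exact closure_minimal interior_subset
        (((hFr ▸ isClosed_closure).union (hF'r ▸ isClosed_closure)))
    · calc F ∪ F' = closure (interior F) ∪ closure (interior F') := by rw [hFr, hF'r]
        _ ⊆ closure (interior (F ∪ F')) := union_subset
            (closure_mono (interior_mono subset_union_left))
            (closure_mono (interior_mono subset_union_right))
  · rintro F ⟨⟨hFr, hFc⟩, hFs⟩; exact ⟨hFr, hFc⟩
  · rintro F ⟨⟨hFr, hFc⟩, hFs⟩
    obtain ⟨K, hKc, hFK, hKs⟩ := exists_compact_between hFc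
      (isOpen_interior.preimage hf) hFs
    refine ⟨closure (interior K), ⟨⟨?_, hKc.of_isClosed_subset isClosed_closure
      (closure_minimal interior_subset hKc.isClosed)⟩,
      (closure_minimal interior_subset hKc.isClosed).trans hKs⟩,
      hFK.trans (interior_maximal subset_closure isOpen_interior)⟩
    apply subset_antisymm
    · exact closure_minimal interior_subset isClosed_closure
    · exact closure_mono (interior_maximal subset_closure isOpen_interior)
end

section
/- Let f : X → Y be a continuous map between locally compact Hausdorff spaces and φ_f(G) = {F ∈ CR(X) : F ⊆ f⁻¹(int G)}. Then for every G ∈ RC(Y) and every F ∈ φ_f(G), there exists H ∈ CR(Y) with H ⊆ int(G) and F ∈ φ_f(H). -/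
open Set

/-- For every G ∈ RC(Y) and every F ∈ φ_f(G), there is H ∈ CR(Y) with
H ⊆ int(G) and F ∈ φ_f(H). -/
theorem stmt_15 {X Y : Type*} [TopologicalSpace X] [LocallyCompactSpace X] [T2Space X]
    [TopologicalSpace Y] [LocallyCompactSpace Y] [T2Space Y]
    (f : X → Y) (hf : Continuous f)
    (G : Set Y) (hG : closure (interior G) = G)
    (F : Set X) (hF : closure (interior F) = F) (hFc : IsCompact F)
    (hFG : F ⊆ f ⁻¹' (interior G)) :
    ∃ H : Set Y, closure (interior H) = H ∧ IsCompact H ∧ H ⊆ interior G ∧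
      F ⊆ f ⁻¹' (interior H) := by
  obtain ⟨L, hLc, hKL, hLU⟩ := exists_compact_between (hFc.image hf) isOpen_interior
    (image_subset_iff.mpr hFG)
  refine ⟨closure (interior L), ?_, ?_, ?_, ?_⟩
  · apply subset_antisymm
    · exact (closure_mono interior_subset).trans (by rw [closure_closure])
    · exact closure_mono (interior_maximal subset_closure isOpen_interior)
  · exact hLc.of_isClosed_subset isClosed_closure (closure_minimal interior_subset hLc.isClosed)
  · exact (closure_minimal interior_subset hLc.isClosed).trans hLU
  · intro x hx
    exact interior_mono subset_closure (interior_maximal Subset.rfl isOpen_interior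
      (hKL ⟨x, hx, rfl⟩))
end

section
/- Let f : X → Y be a continuous map between locally compact Hausdorff spaces and let G₁, G₂, H₁, H₂ ∈ CR(Y) with G_i ⊆ int(H_i) for i = 1,2. If F ∈ CR(X) and F ⊆ f⁻¹(int(G₁ ∪ G₂)), then there exist F₁, F₂ ∈ CR(X) with F_i ⊆ f⁻¹(int(H_i)) for i = 1,2 and F ⊆ F₁ ∪ F₂. -/
open Set

private lemma regularize {X : Type*} [TopologicalSpace X] [LocallyCompactSpace X] [T2Space X]
    {K U : Set X} (hK : IsCompact K) (hU : IsOpen U) (hKU : K ⊆ U) :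
    ∃ L : Set X, closure (interior L) = L ∧ IsCompact L ∧ L ⊆ U ∧ K ⊆ L := by
  obtain ⟨L, hLc, hKL, hLU⟩ := exists_compact_between hK hU hKU
  refine ⟨closure (interior L), ?_, hLc.of_isClosed_subset isClosed_closure
    (closure_minimal interior_subset hLc.isClosed), ?_, ?_⟩
  · refine subset_antisymm (closure_minimal interior_subset isClosed_closure) ?_
    exact closure_mono (interior_maximal subset_closure isOpen_interior)
  · exact (closure_minimal interior_subset hLc.isClosed).trans hLU
  · exact hKL.trans (subset_closure)

/-- If G_i ⊆ int(H_i) (i=1,2) in CR(Y) and F ∈ CR(X) with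
F ⊆ f⁻¹(int(G₁ ∪ G₂)), then F ⊆ F₁ ∪ F₂ for some F_i ∈ CR(X) with
F_i ⊆ f⁻¹(int H_i). -/
theorem stmt_17 {X Y : Type*} [TopologicalSpace X] [LocallyCompactSpace X] [T2Space X]
    [TopologicalSpace Y] [LocallyCompactSpace Y] [T2Space Y]
    (f : X → Y) (hf : Continuous f)
    (G₁ G₂ H₁ H₂ : Set Y)
    (hG₁ : closure (interior G₁) = G₁) (hG₁c : IsCompact G₁)
    (hG₂ : closure (interior G₂) = G₂) (hG₂c : IsCompact G₂)
    (hH₁ : closure (interior H₁) = H₁) (hH₁c : IsCompact H₁)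
    (hH₂ : closure (interior H₂) = H₂) (hH₂c : IsCompact H₂)
    (h₁ : G₁ ⊆ interior H₁) (h₂ : G₂ ⊆ interior H₂)
    (F : Set X) (hF : closure (interior F) = F) (hFc : IsCompact F)
    (hFG : F ⊆ f ⁻¹' (interior (G₁ ∪ G₂))) :
    ∃ F₁ F₂ : Set X,
      (closure (interior F₁) = F₁ ∧ IsCompact F₁ ∧ F₁ ⊆ f ⁻¹' (interior H₁)) ∧
      (closure (interior F₂) = F₂ ∧ IsCompact F₂ ∧ F₂ ⊆ f ⁻¹' (interior H₂)) ∧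
      F ⊆ F₁ ∪ F₂ := by
  have hcov : F ⊆ f ⁻¹' (interior H₁) ∪ f ⁻¹' (interior H₂) := by
    intro x hx
    have : f x ∈ interior (G₁ ∪ G₂) := hFG hx
    have hsub : interior (G₁ ∪ G₂) ⊆ interior H₁ ∪ interior H₂ :=
      interior_subset.trans (union_subset_union h₁ h₂)
    exact hsub this
  obtain ⟨K₁, K₂, hK₁c, hK₂c, hK₁, hK₂, hFK⟩ :=
    hFc.binary_compact_cover (hf.isOpen_preimage _ isOpen_interior)
      (hf.isOpen_preimage _ isOpen_interior) hcov
  obtain ⟨F₁, hF₁r, hF₁c, hF₁U, hK₁F⟩ := regularize hK₁c (hf.isOpen_preimage _ isOpen_interior) hK₁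
  obtain ⟨F₂, hF₂r, hF₂c, hF₂U, hK₂F⟩ := regularize hK₂c (hf.isOpen_preimage _ isOpen_interior) hK₂
  exact ⟨F₁, F₂, ⟨hF₁r, hF₁c, hF₁U⟩, ⟨hF₂r, hF₂c, hF₂U⟩,
    hFK.le.trans (union_subset_union hK₁F hK₂F)⟩
end
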